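/- Let α ≥ 1, r ≥ 0 and c > 0 satisfy r < c − 1 and r ≤ α − 2, and let x : [t₀,∞) → H be a twice continuously differentiable solution of ẍ(t) + (α/t)ẋ(t) + t^r·∇²f(x(t))ẋ(t) + c·t^{r−1}·∇f(x(t)) = 0. Then there exists a constant C > 0 such that f(x(t)) − min_H f ≤ C/t^{r+1} for all t ≥ t₀. -/

import Mathlib

open Real Set MeasureTheory

open InnerProductSpace RealInnerProductSpace in
private lemma grad_convex_ineq' {H : Type*} [NormedAddCommGroup H] [InnerProductSpace ℝ H]
    [CompleteSpace H] (f : H → ℝ) (hconv : ConvexOn ℝ Set.univ f)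
    (hfd : Differentiable ℝ f) (xstar p : H) :
    f p - f xstar ≤ ⟪gradient f p, p - xstar⟫_ℝ := by
  set ℓ : ℝ →ᵃ[ℝ] H := AffineMap.lineMap xstar p with hl
  have hφ : ConvexOn ℝ Set.univ (f ∘ ℓ) := by
    simpa using hconv.comp_affineMap ℓ
  have hd : HasDerivAt (fun s : ℝ => ℓ s) (p - xstar) 1 := by
    have : HasDerivAt (fun s : ℝ => s • (p - xstar) + xstar) ((1:ℝ) • (p - xstar)) 1 :=
      ((hasDerivAt_id (1:ℝ)).smul_const (p - xstar)).add_const xstar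
    simpa [hl, AffineMap.lineMap_apply, one_smul] using this
  have hF : HasFDerivAt f ((toDual ℝ H) (gradient f p)) (ℓ 1) := by
    have := (hfd (ℓ 1)).hasGradientAt
    rw [hasGradientAt_iff_hasFDerivAt] at this
    simpa [hl, AffineMap.lineMap_apply] using this
  have hcomp : HasDerivAt (f ∘ ℓ) (⟪gradient f p, p - xstar⟫_ℝ) 1 := by
    simpa [toDual_apply_apply] using hF.comp_hasDerivAt 1 hd
  have := hφ.slope_le_of_hasDerivAt (mem_univ (0:ℝ)) (mem_univ (1:ℝ)) one_pos hcomp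
  simpa [slope_def_field, hl, AffineMap.lineMap_apply] using this

open InnerProductSpace in
private lemma gradient_differentiable' {H : Type*} [NormedAddCommGroup H]
    [InnerProductSpace ℝ H] [CompleteSpace H] (f : H → ℝ) (hf : ContDiff ℝ 2 f) :
    Differentiable ℝ (gradient f) := by
  have h1 : ContDiff ℝ 1 (fderiv ℝ f) := hf.fderiv_right (by norm_num)
  have : gradient f = fun p => (toDual ℝ H).symm (fderiv ℝ f p) := rfl
  rw [this]
  exact (toDual ℝ H).symm.differentiable.comp (h1.differentiable (by norm_num))

open InnerProductSpace RealInnerProductSpace in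
/-- Case 4 with β(t) = t^r and b(t) = c·t^{r-1}: convergence rate O(1/t^{r+1}). -/
theorem dinavd_power_coefficients_rate
    {H : Type*} [NormedAddCommGroup H] [InnerProductSpace ℝ H] [CompleteSpace H]
    (f : H → ℝ) (hf : ContDiff ℝ 2 f) (hconv : ConvexOn ℝ Set.univ f)
    (xstar : H) (hmin : ∀ y, f xstar ≤ f y)
    (t₀ : ℝ) (ht₀ : 0 < t₀)
    (α r c : ℝ) (hα : 1 ≤ α) (hr : 0 ≤ r) (hc : 0 < c)
    (hrc : r < c - 1) (hrα : r ≤ α - 2)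
    (x x' x'' : ℝ → H)
    (hx' : ∀ t ≥ t₀, HasDerivAt x (x' t) t)
    (hx'' : ∀ t ≥ t₀, HasDerivAt x' (x'' t) t)
    (hx''cont : ContinuousOn x'' (Set.Ici t₀))
    (hode : ∀ t ≥ t₀,
      x'' t + (α / t) • x' t + (t ^ r) • (fderiv ℝ (gradient f) (x t)) (x' t)
        + (c * t ^ (r - 1)) • gradient f (x t) = 0) :
    ∃ C > 0, ∀ t ≥ t₀, f (x t) - f xstar ≤ C / t ^ (r + 1) := by
  have hfd : Differentiable ℝ f := hf.differentiable (by norm_num)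
  have hGdiff : Differentiable ℝ (gradient f) := gradient_differentiable' f hf
  set a : ℝ := c - r - 1 with ha_def
  have ha : 0 < a := by rw [ha_def]; linarith
  set G : H → H := gradient f with hG
  set g : ℝ → ℝ := fun t => f (x t) - f xstar with hg_def
  set v : ℝ → H := fun t => (α - 1) • (x t - xstar) + t • x' t + t ^ (r + 1) • G (x t)
    with hv_def
  set E : ℝ → ℝ := fun t => a * (t ^ (r + 1) * g t) + (1/2) * ⟪v t, v t⟫_ℝ with hE_def
  set E' : ℝ → ℝ := fun t =>
      a * ((r + 1) * t ^ r * g t + t ^ (r + 1) * ⟪G (x t), x' t⟫_ℝ)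
      + ((r + 1 - c) * t ^ r) * ⟪v t, G (x t)⟫_ℝ with hE'_def
  -- derivative of E
  have hEd : ∀ t ≥ t₀, HasDerivAt E (E' t) t := by
    intro t ht
    have htpos : 0 < t := lt_of_lt_of_le ht₀ ht
    have hxd := hx' t ht
    have hGx : HasDerivAt (fun s => G (x s)) ((fderiv ℝ (gradient f) (x t)) (x' t)) t :=
      ((hGdiff (x t)).hasFDerivAt).comp_hasDerivAt t hxd
    have hrp : HasDerivAt (fun s : ℝ => s ^ (r + 1)) ((r + 1) * t ^ r) t := by
      have := Real.hasDerivAt_rpow_const (x := t) (p := r + 1) (Or.inl (ne_of_gt htpos))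
      simpa [add_sub_cancel_right] using this
    have hvd : HasDerivAt v (((r + 1 - c) * t ^ r) • G (x t)) t := by
      have h1 : HasDerivAt (fun s => (α - 1) • (x s - xstar)) ((α - 1) • x' t) t :=
        (hxd.sub_const xstar).const_smul _
      have h2 : HasDerivAt (fun s : ℝ => s • x' s) ((1:ℝ) • x' t + t • x'' t) t := by
        simpa [add_comm] using (hasDerivAt_id t).fun_smul (hx'' t ht)
      have h3 : HasDerivAt (fun s => s ^ (r + 1) • G (x s))
          (((r + 1) * t ^ r) • G (x t)
            + t ^ (r + 1) • (fderiv ℝ (gradient f) (x t)) (x' t)) t := by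
        simpa [add_comm] using hrp.fun_smul hGx
      have hsum := (h1.fun_add h2).fun_add h3
      convert hsum using 1
      have h := hode t ht
      have e1 : t * t ^ r = t ^ (r + 1) := by
        have := Real.rpow_add htpos 1 r
        simpa [Real.rpow_one, show (1:ℝ) + r = r + 1 by ring] using this.symm
      have e2 : t * t ^ (r - 1) = t ^ r := by
        have := Real.rpow_add htpos 1 (r - 1)
        simpa [Real.rpow_one, show (1:ℝ) + (r - 1) = r by ring] using this.symm
      have hx2 : x'' t = -((α / t) • x' t) - (t ^ r) • (fderiv ℝ (gradient f) (x t)) (x' t)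
          - (c * t ^ (r - 1)) • G (x t) := by
        linear_combination (norm := module) h
      rw [hx2, ← e1, ← e2]
      have htne : t ≠ 0 := ne_of_gt htpos
      match_scalars <;> field_simp <;> ring
    have hfx : HasDerivAt (fun s => f (x s)) (⟪G (x t), x' t⟫_ℝ) t := by
      have hgr := (hfd (x t)).hasGradientAt
      rw [hasGradientAt_iff_hasFDerivAt] at hgr
      rw [hG, inner_gradient_left]; exact (hfd (x t)).hasFDerivAt.comp_hasDerivAt t hxd
    have hgd : HasDerivAt g (⟪G (x t), x' t⟫_ℝ) t := hfx.sub_const _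
    have h1 : HasDerivAt (fun s => s ^ (r + 1) * g s)
        ((r + 1) * t ^ r * g t + t ^ (r + 1) * ⟪G (x t), x' t⟫_ℝ) t := hrp.mul hgd
    have hinner : HasDerivAt (fun s => ⟪v s, v s⟫_ℝ)
        (⟪v t, ((r + 1 - c) * t ^ r) • G (x t)⟫_ℝ
          + ⟪((r + 1 - c) * t ^ r) • G (x t), v t⟫_ℝ) t := hvd.inner ℝ hvd
    have := (h1.const_mul a).fun_add (hinner.const_mul (1/2 : ℝ))
    refine this.congr_deriv ?_
    simp only [hE'_def, real_inner_smul_left, real_inner_smul_right, real_inner_comm (v t)]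
    ring
  -- E' is nonpositive on [t₀, ∞)
  have hE'neg : ∀ t ≥ t₀, E' t ≤ 0 := by
    intro t ht
    have htpos : 0 < t := lt_of_lt_of_le ht₀ ht
    have e1 : t * t ^ r = t ^ (r + 1) := by
      have := Real.rpow_add htpos 1 r
      simpa [Real.rpow_one, show (1:ℝ) + r = r + 1 by ring] using this.symm
    have hp : (0:ℝ) < t ^ r := Real.rpow_pos_of_pos htpos r
    have hq : (0:ℝ) < t ^ (r + 1) := Real.rpow_pos_of_pos htpos (r + 1)
    have hip : ⟪v t, G (x t)⟫_ℝ = (α - 1) * ⟪x t - xstar, G (x t)⟫_ℝ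
        + t * ⟪x' t, G (x t)⟫_ℝ + t ^ (r + 1) * ⟪G (x t), G (x t)⟫_ℝ := by
      simp [hv_def, inner_add_left, real_inner_smul_left]
    have hI1 : g t ≤ ⟪x t - xstar, G (x t)⟫_ℝ := by
      have := grad_convex_ineq' f hconv hfd xstar (x t)
      simpa [hg_def, real_inner_comm, -inner_gradient_left, -inner_gradient_right] using this
    have hg0 : 0 ≤ g t := sub_nonneg.2 (hmin (x t))
    have hI3 : 0 ≤ ⟪G (x t), G (x t)⟫_ℝ := real_inner_self_nonneg
    have hsymm : ⟪x' t, G (x t)⟫_ℝ = ⟪G (x t), x' t⟫_ℝ := real_inner_comm _ _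
    simp only [hE'_def, hip, hsymm]
    have hα2 : r + 1 ≤ α - 1 := by linarith
    rw [show r + 1 - c = -a by rw [ha_def]; ring, ← e1]
    have h1 : (r + 1) * g t ≤ (α - 1) * ⟪x t - xstar, G (x t)⟫_ℝ := by
      nlinarith [hI1, hg0, hα2, hr]
    nlinarith [mul_le_mul_of_nonneg_left h1 (le_of_lt (mul_pos ha hp)),
      mul_nonneg (mul_nonneg (le_of_lt (mul_pos ha hp)) (le_of_lt htpos))
        (mul_nonneg (le_of_lt hp) hI3)]
  -- E is antitone on [t₀, ∞)
  have hmono : AntitoneOn E (Ici t₀) := by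
    apply antitoneOn_of_deriv_nonpos (convex_Ici t₀)
    · exact fun t ht => (hEd t ht).continuousAt.continuousWithinAt
    · intro t ht
      rw [interior_Ici] at ht
      exact (hEd t (le_of_lt ht)).differentiableAt.differentiableWithinAt
    · intro t ht
      rw [interior_Ici] at ht
      rw [(hEd t (le_of_lt ht)).deriv]
      exact hE'neg t (le_of_lt ht)
  -- conclusion
  have hE0 : 0 ≤ E t₀ := by
    have hg0 : 0 ≤ g t₀ := sub_nonneg.2 (hmin (x t₀))
    have hq : (0:ℝ) < t₀ ^ (r + 1) := Real.rpow_pos_of_pos ht₀ (r + 1)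
    have hI : 0 ≤ ⟪v t₀, v t₀⟫_ℝ := real_inner_self_nonneg
    have h0 : 0 ≤ a * (t₀ ^ (r + 1) * g t₀) := by positivity
    have hEt : E t₀ = a * (t₀ ^ (r + 1) * g t₀) + (1/2) * ⟪v t₀, v t₀⟫_ℝ := by rw [hE_def]
    rw [hEt]
    exact add_nonneg h0 (mul_nonneg (by norm_num) hI)
  refine ⟨E t₀ / a + 1, by positivity, fun t ht => ?_⟩
  have htpos : 0 < t := lt_of_lt_of_le ht₀ ht
  have hq : (0:ℝ) < t ^ (r + 1) := Real.rpow_pos_of_pos htpos (r + 1)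
  have hle : E t ≤ E t₀ := hmono self_mem_Ici ht ht
  have hlow : a * (t ^ (r + 1) * g t) ≤ E t := by
    have hI : 0 ≤ ⟪v t, v t⟫_ℝ := real_inner_self_nonneg
    have hEt : E t = a * (t ^ (r + 1) * g t) + (1/2) * ⟪v t, v t⟫_ℝ := by rw [hE_def]
    rw [hEt]; linarith
  have key : a * (t ^ (r + 1) * g t) ≤ E t₀ := le_trans hlow hle
  have hgoal : g t ≤ (E t₀ / a + 1) / t ^ (r + 1) := by
    rw [le_div_iff₀ hq, ← mul_le_mul_iff_of_pos_right ha,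
      show (E t₀ / a + 1) * a = E t₀ + a by field_simp]
    nlinarith [key]
  simpa [hg_def] using hgoal
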